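/- arXiv:1411.5851 — 3 statements merged into one kernel-verified Lean document; each statement's English description precedes it below -/
import Mathlib

section
/- Let G and H be topological groups (or Lie groups), V a locally convex space, and μ : G × V → V a map that is continuous and linear in the second argument. Let f : G → V be a map satisfying f(h·g) = f(g) + μ(g⁻¹, f(h)) for all g, h ∈ G. If f is smooth on some neighborhood of the identity of G, then f is smooth on all of G. -/
open scoped Manifold

/-- If `f : G → V` (G a Lie group modelled on a locally convex space,
here a normed space, V a locally convex space, here a normed space) satisfies the
cocycle identity `f (h * g) = f g + μ g⁻¹ (f h)` for a map `μ : G × V → V` that is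
continuous linear in the second argument, and `f` is smooth on some neighbourhood
of the identity, then `f` is smooth. -/
theorem stmt0
    {E : Type} [NormedAddCommGroup E] [NormedSpace ℝ E]
    {H : Type} [TopologicalSpace H] {I : ModelWithCorners ℝ E H}
    {G : Type} [TopologicalSpace G] [ChartedSpace H G] [Group G] [LieGroup I (⊤ : ℕ∞) G]
    {V : Type} [NormedAddCommGroup V] [NormedSpace ℝ V]
    (μ : G → V →L[ℝ] V) (f : G → V)
    (hcoc : ∀ g h : G, f (h * g) = f g + μ g⁻¹ (f h))
    (U : Set G) (hU : U ∈ nhds (1 : G))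
    (hf : ContMDiffOn I 𝓘(ℝ, V) (⊤ : ℕ∞) f U) :
    ContMDiff I 𝓘(ℝ, V) (⊤ : ℕ∞) f := by
  intro g₀
  have key : f = fun x => f g₀ + μ g₀⁻¹ (f (x * g₀⁻¹)) := by
    funext x
    have := hcoc g₀ (x * g₀⁻¹)
    simpa using this
  rw [key]
  have h1 : ContMDiffAt I 𝓘(ℝ, V) (⊤ : ℕ∞) f 1 := hf.contMDiffAt hU
  have hmul : ContMDiffAt I I (⊤ : ℕ∞) (fun x : G => x * g₀⁻¹) g₀ :=
    (contMDiff_id.mul contMDiff_const).contMDiffAt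
  have h2 : ContMDiffAt I 𝓘(ℝ, V) (⊤ : ℕ∞) (fun x => f (x * g₀⁻¹)) g₀ := by
    have h1' : ContMDiffAt I 𝓘(ℝ, V) (⊤ : ℕ∞) f (g₀ * g₀⁻¹) := by
      rwa [mul_inv_cancel]
    exact h1'.comp g₀ hmul
  exact (contMDiffAt_const.add (((μ g₀⁻¹).contMDiff.contMDiffAt).comp g₀ h2))
end

section
/- Let M be a connected finite-dimensional smooth manifold, E a finite-dimensional vector space, and θ ∈ Ω¹(M,E) a smooth 1-form. Suppose that for all smooth closed curves α₀, α₁ : [0,1] → M that are smoothly homotopic relative to {0,1}, one has ∫_{α₀} θ = ∫_{α₁} θ. Then θ is closed, i.e., dθ = 0. -/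
open scoped Manifold
open MeasureTheory Set

namespace Stmt8Aux

lemma ae_ne_const (c : ℝ) : ∀ᵐ t : ℝ, t ≠ c := by
  refine MeasureTheory.ae_iff.mpr ?_
  simp [not_not, Set.setOf_eq_eq_singleton]

variable {E : Type} [NormedAddCommGroup E] [NormedSpace ℝ E] [CompleteSpace E]

lemma hasDerivAt_smul_of_continuousAt {Φ : ℝ → E} (hΦ : ContinuousAt Φ 0) :
    HasDerivAt (fun h : ℝ => h • Φ h) (Φ 0) 0 := by
  rw [hasDerivAt_iff_tendsto_slope]
  have h1 : ∀ h ∈ ({(0:ℝ)}ᶜ : Set ℝ), Φ h = slope (fun h : ℝ => h • Φ h) 0 h := by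
    intro h hh
    simp only [mem_compl_iff, mem_singleton_iff] at hh
    simp [slope, hh, smul_smul, inv_mul_cancel₀]
  exact Filter.Tendsto.congr' (eventually_nhdsWithin_of_forall h1)
    (hΦ.continuousWithinAt.tendsto)

lemma hasDerivAt_parametric (f f' : ℝ → ℝ → E)
    (hf : Continuous fun p : ℝ × ℝ => f p.1 p.2)
    (hf' : Continuous fun p : ℝ × ℝ => f' p.1 p.2)
    (hd : ∀ x t, HasDerivAt (fun x => f x t) (f' x t) x) (x₀ : ℝ) :
    HasDerivAt (fun x => ∫ u in (0:ℝ)..1, f x u) (∫ u in (0:ℝ)..1, f' x₀ u) x₀ := by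
  obtain ⟨C, hC⟩ : ∃ C, ∀ p ∈ (Icc (x₀ - 1) (x₀ + 1) ×ˢ Icc (0:ℝ) 1),
      ‖(fun p : ℝ × ℝ => f' p.1 p.2) p‖ ≤ C :=
    ((isCompact_Icc.prod isCompact_Icc).exists_bound_of_continuousOn hf'.continuousOn)
  refine (intervalIntegral.hasDerivAt_integral_of_dominated_loc_of_deriv_le
    (F := f) (F' := f') (bound := fun _ => C) (Metric.ball_mem_nhds x₀ one_pos) ?_ ?_ ?_ ?_ ?_ ?_).2
  · exact Filter.Eventually.of_forall fun x =>
      (hf.comp (continuous_const.prodMk continuous_id)).aestronglyMeasurable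
  · exact (hf.comp (continuous_const.prodMk continuous_id)).intervalIntegrable _ _
  · exact (hf'.comp (continuous_const.prodMk continuous_id)).aestronglyMeasurable
  · refine Filter.Eventually.of_forall fun t ht x hx => hC (x, t) ?_
    have h1 : t ∈ Icc (0:ℝ) 1 := by
      rcases Set.mem_uIoc.mp ht with h | h
      · exact ⟨le_of_lt h.1, h.2⟩
      · exact ⟨by linarith [h.1, h.2], by linarith [h.1, h.2]⟩
    have h2 : x ∈ Icc (x₀ - 1) (x₀ + 1) := by
      have := abs_lt.mp (by simpa [Real.dist_eq] using Metric.mem_ball.mp hx)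
      constructor <;> linarith [this.1, this.2]
    exact ⟨h2, h1⟩
  · exact intervalIntegrable_const
  · exact Filter.Eventually.of_forall fun t _ x _ => hd x t

/-- The core analytic lemma. -/
lemma core (g₁ g₂ : ℝ × ℝ → E) (hg₁ : ContDiff ℝ ((⊤:ℕ∞) : WithTop ℕ∞) g₁)
    (hg₂ : ContDiff ℝ ((⊤:ℕ∞) : WithTop ℕ∞) g₂)
    (hrect : ∀ (x : ℝ × ℝ) (h k : ℝ),
      ((∫ u in (0:ℝ)..1, h • g₁ (x + (h * u, 0))) +
        ∫ u in (0:ℝ)..1, k • g₂ (x + (h, k * u)))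
      = (∫ u in (0:ℝ)..1, h • g₁ (x + (h * u, k))) +
        ∫ u in (0:ℝ)..1, k • g₂ (x + (0, k * u)))
    (x : ℝ × ℝ) : fderiv ℝ g₂ x (1, 0) = fderiv ℝ g₁ x (0, 1) := by
  have hn : ((⊤:ℕ∞) : WithTop ℕ∞) ≠ 0 := by simp
  have hg₁c : Continuous g₁ := hg₁.continuous
  have hg₂c : Continuous g₂ := hg₂.continuous
  have hg₂d : Continuous fun y => (fderiv ℝ g₂ y) (1, 0) :=
    (hg₂.continuous_fderiv hn).clm_apply continuous_const
  have hg₁d : Differentiable ℝ g₁ := hg₁.differentiable hn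
  have hg₂dd : Differentiable ℝ g₂ := hg₂.differentiable hn
  have step1 : ∀ k : ℝ,
      g₁ x + (∫ u in (0:ℝ)..1, k • (fderiv ℝ g₂ (x + (0, k * u))) (1, 0))
        = g₁ (x + (0, k)) := by
    intro k
    have hT1 : HasDerivAt (fun h : ℝ => ∫ u in (0:ℝ)..1, h • g₁ (x + (h * u, 0)))
        (g₁ x) 0 := by
      have hcont : Continuous fun h : ℝ => ∫ u in (0:ℝ)..1, g₁ (x + (h * u, 0)) := by
        apply intervalIntegral.continuous_parametric_intervalIntegral_of_continuous'
        exact hg₁c.comp (by fun_prop)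
      have := hasDerivAt_smul_of_continuousAt hcont.continuousAt
      have h0 : (∫ (_u : ℝ) in (0:ℝ)..1, g₁ (x + (0 * _u, 0))) = g₁ x := by simp [Prod.mk_zero_zero]
      rw [h0] at this
      simpa [intervalIntegral.integral_smul] using this
    have hT3 : HasDerivAt (fun h : ℝ => ∫ u in (0:ℝ)..1, h • g₁ (x + (h * u, k)))
        (g₁ (x + (0, k))) 0 := by
      have hcont : Continuous fun h : ℝ => ∫ u in (0:ℝ)..1, g₁ (x + (h * u, k)) := by
        apply intervalIntegral.continuous_parametric_intervalIntegral_of_continuous'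
        exact hg₁c.comp (by fun_prop)
      have := hasDerivAt_smul_of_continuousAt hcont.continuousAt
      have h0 : (∫ (_u : ℝ) in (0:ℝ)..1, g₁ (x + (0 * _u, k))) = g₁ (x + (0, k)) := by simp
      rw [h0] at this
      simpa [intervalIntegral.integral_smul] using this
    have hT2 : HasDerivAt (fun h : ℝ => ∫ u in (0:ℝ)..1, k • g₂ (x + (h, k * u)))
        (∫ u in (0:ℝ)..1, k • (fderiv ℝ g₂ (x + (0, k * u))) (1, 0)) 0 := by
      apply hasDerivAt_parametric
        (f := fun h u => k • g₂ (x + (h, k * u)))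
        (f' := fun h u => k • (fderiv ℝ g₂ (x + (h, k * u))) (1, 0))
      · exact (hg₂c.comp (by fun_prop)).const_smul k
      · exact (((hg₂.continuous_fderiv hn).comp (by fun_prop)).clm_apply
          continuous_const).const_smul k
      · intro h u
        have hc : HasDerivAt (fun h : ℝ => x + (h, k * u)) ((1 : ℝ), (0 : ℝ)) h := by
          simpa using ((hasDerivAt_id h).prodMk (hasDerivAt_const h (k * u))).const_add x
        exact ((hg₂dd _).hasFDerivAt.comp_hasDerivAt h hc).const_smul k
    have hfun : (fun h : ℝ => (∫ u in (0:ℝ)..1, h • g₁ (x + (h * u, 0))) +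
          ∫ u in (0:ℝ)..1, k • g₂ (x + (h, k * u)))
        = (fun h : ℝ => (∫ u in (0:ℝ)..1, h • g₁ (x + (h * u, k))) +
          ∫ u in (0:ℝ)..1, k • g₂ (x + (0, k * u))) :=
      funext fun h => hrect x h k
    have hL : HasDerivAt (fun h : ℝ => (∫ u in (0:ℝ)..1, h • g₁ (x + (h * u, 0))) +
          ∫ u in (0:ℝ)..1, k • g₂ (x + (h, k * u))) _ 0 := hT1.add hT2
    rw [hfun] at hL
    have hR : HasDerivAt (fun h : ℝ => (∫ u in (0:ℝ)..1, h • g₁ (x + (h * u, k))) +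
          ∫ u in (0:ℝ)..1, k • g₂ (x + (0, k * u))) _ 0 := hT3.add (hasDerivAt_const (0:ℝ)
      (∫ u in (0:ℝ)..1, k • g₂ (x + (0, k * u))))
    have := hL.unique hR
    simpa using this
  have hS : HasDerivAt (fun k : ℝ => g₁ (x + (0, k)) - g₁ x)
      ((fderiv ℝ g₁ x) (0, 1)) 0 := by
    have hc : HasDerivAt (fun k : ℝ => x + ((0:ℝ), k)) ((0 : ℝ), (1 : ℝ)) 0 := by
      simpa using ((hasDerivAt_const (0:ℝ) (0:ℝ)).prodMk (hasDerivAt_id (0:ℝ))).const_add x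
    have h1 := (hg₁d _).hasFDerivAt.comp_hasDerivAt 0 hc
    have h2 := h1.sub_const (g₁ x)
    simpa [Prod.mk_zero_zero] using h2
  have hS' : HasDerivAt (fun k : ℝ => g₁ (x + (0, k)) - g₁ x)
      ((fderiv ℝ g₂ x) (1, 0)) 0 := by
    have hfun : (fun k : ℝ => g₁ (x + (0, k)) - g₁ x)
        = fun k : ℝ => k • ∫ u in (0:ℝ)..1, (fderiv ℝ g₂ (x + (0, k * u))) (1, 0) := by
      funext k
      have h3 := step1 k
      rw [intervalIntegral.integral_smul] at h3
      rw [sub_eq_iff_eq_add, ← h3]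
      abel
    rw [hfun]
    have hcont : Continuous fun k : ℝ =>
        ∫ u in (0:ℝ)..1, (fderiv ℝ g₂ (x + (0, k * u))) (1, 0) := by
      apply intervalIntegral.continuous_parametric_intervalIntegral_of_continuous'
      exact ((hg₂.continuous_fderiv hn).comp
        (show Continuous fun p : ℝ × ℝ => x + ((0:ℝ), p.1 * p.2) by fun_prop)).clm_apply
        continuous_const
    have h4 := hasDerivAt_smul_of_continuousAt hcont.continuousAt
    have h0 : (∫ (_u : ℝ) in (0:ℝ)..1, (fderiv ℝ g₂ (x + (0, 0 * _u))) (1, 0))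
        = (fderiv ℝ g₂ x) (1, 0) := by simp [Prod.mk_zero_zero]
    rw [h0] at h4
    exact h4
  exact hS'.unique hS

section Manifold

variable
    {EM : Type} [NormedAddCommGroup EM] [NormedSpace ℝ EM] [FiniteDimensional ℝ EM]
    {HM : Type} [TopologicalSpace HM] {I : ModelWithCorners ℝ EM HM}
    {M : Type} [TopologicalSpace M] [ChartedSpace HM M] [IsManifold I (⊤ : ℕ∞) M]
    {E : Type} [NormedAddCommGroup E] [NormedSpace ℝ E] [FiniteDimensional ℝ E]

lemma contMDiff_const_sec (v : ℝ × ℝ) :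
    ContMDiff 𝓘(ℝ, ℝ × ℝ) (𝓘(ℝ, ℝ × ℝ)).tangent (⊤ : ℕ∞)
      (fun y : ℝ × ℝ => (⟨y, v⟩ : TangentBundle 𝓘(ℝ, ℝ × ℝ) (ℝ × ℝ))) := by
  intro y
  refine (Bundle.contMDiffAt_section (E := TangentSpace 𝓘(ℝ, ℝ × ℝ)) (s := fun _ => v) y).2 ?_
  have : (fun y' : ℝ × ℝ =>
      (trivializationAt (ℝ × ℝ) (TangentSpace 𝓘(ℝ, ℝ × ℝ)) y ⟨y', v⟩).2) = fun _ => v := by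
    funext y'
    simp [TangentBundle.trivializationAt_apply]
  rw [this]
  exact contMDiffAt_const

omit [FiniteDimensional ℝ EM] [FiniteDimensional ℝ E] in
lemma smooth_pullback_form
    (θ : ∀ p : M, TangentSpace I p →L[ℝ] E)
    (hθ : ContMDiff I.tangent 𝓘(ℝ, E) (⊤ : ℕ∞) (fun v : TangentBundle I M => θ v.proj v.2))
    (σ : ℝ × ℝ → M) (hσ : ContMDiff 𝓘(ℝ, ℝ × ℝ) I (⊤ : ℕ∞) σ) (v : ℝ × ℝ) :
    ContDiff ℝ ((⊤:ℕ∞) : WithTop ℕ∞)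
      (fun y : ℝ × ℝ => θ (σ y) (mfderiv 𝓘(ℝ, ℝ × ℝ) I σ y v)) := by
  have htan : ContMDiff (𝓘(ℝ, ℝ × ℝ)).tangent I.tangent (⊤ : ℕ∞)
      (tangentMap 𝓘(ℝ, ℝ × ℝ) I σ) :=
    hσ.contMDiff_tangentMap (m := (⊤ : ℕ∞)) (by simp)
  have hcomp : ContMDiff 𝓘(ℝ, ℝ × ℝ) 𝓘(ℝ, E) (⊤ : ℕ∞)
      (fun y : ℝ × ℝ => θ (σ y) (mfderiv 𝓘(ℝ, ℝ × ℝ) I σ y v)) := by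
    have := (hθ.comp htan).comp (contMDiff_const_sec v)
    convert this using 1
    funext y
    rfl
  exact hcomp.contDiff

end Manifold

end Stmt8Aux

open Stmt8Aux

/-- On a connected finite-dimensional smooth manifold `M`, a smooth
1-form `θ` with values in a finite-dimensional vector space `E` whose line integrals
over smoothly homotopic (rel endpoints) closed curves agree is closed.  Closedness
`dθ = 0` is expressed by the symmetry of the derivative of the pullback of `θ` along
every smooth map `σ : ℝ² → M`. -/
theorem stmt8
    {EM : Type} [NormedAddCommGroup EM] [NormedSpace ℝ EM] [FiniteDimensional ℝ EM]
    {HM : Type} [TopologicalSpace HM] {I : ModelWithCorners ℝ EM HM}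
    {M : Type} [TopologicalSpace M] [ChartedSpace HM M] [IsManifold I (⊤ : ℕ∞) M]
    [ConnectedSpace M]
    {E : Type} [NormedAddCommGroup E] [NormedSpace ℝ E] [FiniteDimensional ℝ E]
    (θ : ∀ p : M, TangentSpace I p →L[ℝ] E)
    (hθ : ContMDiff I.tangent 𝓘(ℝ, E) (⊤ : ℕ∞) (fun v : TangentBundle I M => θ v.proj v.2))
    (hint : ∀ α₀ α₁ : ℝ → M, ContMDiff 𝓘(ℝ, ℝ) I (⊤ : ℕ∞) α₀ → ContMDiff 𝓘(ℝ, ℝ) I (⊤ : ℕ∞) α₁ →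
      α₀ 0 = α₀ 1 → α₁ 0 = α₁ 1 →
      (∃ F : ℝ × ℝ → M, ContMDiff 𝓘(ℝ, ℝ × ℝ) I (⊤ : ℕ∞) F ∧
        (∀ t, F (0, t) = α₀ t) ∧ (∀ t, F (1, t) = α₁ t) ∧
        (∀ s, F (s, 0) = α₀ 0) ∧ (∀ s, F (s, 1) = α₀ 1)) →
      (∫ t in (0:ℝ)..1, θ (α₀ t) (mfderiv 𝓘(ℝ, ℝ) I α₀ t (1 : ℝ))) =
        ∫ t in (0:ℝ)..1, θ (α₁ t) (mfderiv 𝓘(ℝ, ℝ) I α₁ t (1 : ℝ))) :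
    ∀ σ : ℝ × ℝ → M, ContMDiff 𝓘(ℝ, ℝ × ℝ) I (⊤ : ℕ∞) σ → ∀ x : ℝ × ℝ,
      fderiv ℝ (fun y => θ (σ y) (mfderiv 𝓘(ℝ, ℝ × ℝ) I σ y ((0, 1) : ℝ × ℝ))) x (1, 0)
        = fderiv ℝ (fun y => θ (σ y) (mfderiv 𝓘(ℝ, ℝ × ℝ) I σ y ((1, 0) : ℝ × ℝ))) x
            (0, 1) := by
  intro σ hσ x
  have hone : (1 : WithTop ℕ∞) ≤ ((⊤:ℕ∞) : WithTop ℕ∞) := by exact_mod_cast le_top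
  set ψ₁ : ℝ × ℝ → E := fun y => θ (σ y) (mfderiv 𝓘(ℝ, ℝ × ℝ) I σ y ((1, 0) : ℝ × ℝ))
    with hψ₁def
  set ψ₂ : ℝ × ℝ → E := fun y => θ (σ y) (mfderiv 𝓘(ℝ, ℝ × ℝ) I σ y ((0, 1) : ℝ × ℝ))
    with hψ₂def
  have hsm₁ : ContDiff ℝ ((⊤:ℕ∞) : WithTop ℕ∞) ψ₁ := smooth_pullback_form θ hθ σ hσ _
  have hsm₂ : ContDiff ℝ ((⊤:ℕ∞) : WithTop ℕ∞) ψ₂ := smooth_pullback_form θ hθ σ hσ _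
  have hψ₁c : Continuous ψ₁ := hsm₁.continuous
  have hψ₂c : Continuous ψ₂ := hsm₂.continuous
  -- the key consequence of the homotopy-invariance hypothesis: line integrals of the
  -- pullback of θ under σ over smooth loops in ℝ² vanish.
  have key : ∀ γ : ℝ → ℝ × ℝ, ContDiff ℝ ((⊤:ℕ∞) : WithTop ℕ∞) γ → γ 1 = γ 0 →
      (∫ t in (0:ℝ)..1, θ (σ (γ t)) (mfderiv 𝓘(ℝ, ℝ × ℝ) I σ (γ t) ((deriv γ t : ℝ × ℝ)))) = 0 := by
    intro γ hγ hloop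
    have hγM : ContMDiff 𝓘(ℝ, ℝ) 𝓘(ℝ, ℝ × ℝ) (⊤ : ℕ∞) γ := hγ.contMDiff
    set α₀ : ℝ → M := σ ∘ γ with hα₀def
    have hα₀ : ContMDiff 𝓘(ℝ, ℝ) I (⊤ : ℕ∞) α₀ := hσ.comp hγM
    have hcl₀ : α₀ 0 = α₀ 1 := by simp only [hα₀def, Function.comp_apply, hloop]
    have hF : ∃ F : ℝ × ℝ → M, ContMDiff 𝓘(ℝ, ℝ × ℝ) I (⊤ : ℕ∞) F ∧
        (∀ t, F (0, t) = α₀ t) ∧ (∀ t, F (1, t) = (fun _ : ℝ => σ (γ 0)) t) ∧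
        (∀ s, F (s, 0) = α₀ 0) ∧ (∀ s, F (s, 1) = α₀ 1) := by
      refine ⟨fun p => σ (γ 0 + (1 - p.1) • (γ p.2 - γ 0)), ?_, ?_, ?_, ?_, ?_⟩
      · exact hσ.comp (ContDiff.contMDiff (contDiff_const.add
          ((contDiff_const.sub contDiff_fst).smul
            ((hγ.comp contDiff_snd).sub contDiff_const))))
      · intro t; simp [hα₀def]
      · intro t; simp
      · intro s; simp [hα₀def]
      · intro s; simp [hα₀def, hloop]
    have h0 := hint α₀ (fun _ : ℝ => σ (γ 0)) hα₀ contMDiff_const hcl₀ rfl hF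
    have hz : (∫ t in (0:ℝ)..1,
        θ ((fun _ : ℝ => σ (γ 0)) t) (mfderiv 𝓘(ℝ, ℝ) I (fun _ : ℝ => σ (γ 0)) t (1:ℝ))) = 0 := by
      have hz0 : ∀ t : ℝ, θ ((fun _ : ℝ => σ (γ 0)) t)
          (mfderiv 𝓘(ℝ, ℝ) I (fun _ : ℝ => σ (γ 0)) t (1:ℝ)) = 0 := fun t => by
        rw [mfderiv_const]; exact (θ (σ (γ 0))).map_zero
      simp only [hz0, intervalIntegral.integral_zero]
    rw [hz] at h0
    rw [← h0]
    apply intervalIntegral.integral_congr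
    intro t _
    have h1 := mfderiv_comp (I := 𝓘(ℝ, ℝ)) (I' := 𝓘(ℝ, ℝ × ℝ)) (I'' := I) t
      (hσ.mdifferentiableAt (by simp)) (hγM.mdifferentiableAt (by simp))
    have h4 := DFunLike.congr_fun h1 (1:ℝ)
    have h6 : mfderiv 𝓘(ℝ, ℝ) 𝓘(ℝ, ℝ × ℝ) γ t (1:ℝ) = (deriv γ t : ℝ × ℝ) := by
      rw [mfderiv_eq_fderiv]; rfl
    have h2 : mfderiv 𝓘(ℝ, ℝ) I α₀ t (1:ℝ)
        = mfderiv 𝓘(ℝ, ℝ × ℝ) I σ (γ t) ((deriv γ t : ℝ × ℝ)) :=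
      h4.trans (congrArg (fun w => mfderiv 𝓘(ℝ, ℝ × ℝ) I σ (γ t) w) h6)
    exact (congrArg (θ (σ (γ t))) h2).symm
  -- the rectangle identity for the pullback form
  have hrect : ∀ (z : ℝ × ℝ) (h k : ℝ),
      ((∫ u in (0:ℝ)..1, h • ψ₁ (z + (h * u, 0))) +
        ∫ u in (0:ℝ)..1, k • ψ₂ (z + (h, k * u)))
      = (∫ u in (0:ℝ)..1, h • ψ₁ (z + (h * u, k))) +
        ∫ u in (0:ℝ)..1, k • ψ₂ (z + (0, k * u)) := by
    intro z h k
    set τ : ℝ → ℝ := Real.smoothTransition with hτdef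
    have hτ : ContDiff ℝ ((⊤:ℕ∞) : WithTop ℕ∞) τ := Real.smoothTransition.contDiff
    have hτ0 : ∀ u : ℝ, u ≤ 0 → τ u = 0 := fun u hu => Real.smoothTransition.zero_of_nonpos hu
    have hτ1 : ∀ u : ℝ, 1 ≤ u → τ u = 1 := fun u hu => Real.smoothTransition.one_of_one_le hu
    set a : ℝ → ℝ := fun t => τ (4 * t) - τ (4 * t - 2) with hadef
    set b : ℝ → ℝ := fun t => τ (4 * t - 1) - τ (4 * t - 3) with hbdef
    have ha : ContDiff ℝ ((⊤:ℕ∞) : WithTop ℕ∞) a :=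
      (hτ.comp (by fun_prop)).sub (hτ.comp (by fun_prop))
    have hb : ContDiff ℝ ((⊤:ℕ∞) : WithTop ℕ∞) b :=
      (hτ.comp (by fun_prop)).sub (hτ.comp (by fun_prop))
    have hac : Continuous (deriv a) := ha.continuous_deriv hone
    have hbc : Continuous (deriv b) := hb.continuous_deriv hone
    have ha_left : ∀ t : ℝ, t ≤ 1/4 → a t = τ (4 * t) := by
      intro t ht; simp only [hadef]; rw [hτ0 (4*t-2) (by linarith), sub_zero]
    have ha0 : a 0 = 0 := by rw [ha_left 0 (by norm_num)]; exact hτ0 _ (by norm_num)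
    have haq : a (1/4) = 1 := by rw [ha_left (1/4) le_rfl]; exact hτ1 _ (by norm_num)
    have ha_one : ∀ t : ℝ, 1/4 ≤ t → t ≤ 1/2 → a t = 1 := by
      intro t h1 h2; simp only [hadef]
      rw [hτ1 (4*t) (by linarith), hτ0 (4*t-2) (by linarith)]; norm_num
    have ha_right : ∀ t : ℝ, 1/2 ≤ t → a t = 1 - τ (4*t-2) := by
      intro t ht; simp only [hadef]; rw [hτ1 (4*t) (by linarith)]
    have hah : a (1/2) = 1 := by
      rw [ha_right _ le_rfl, hτ0 _ (by norm_num)]; norm_num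
    have ha3q : a (3/4) = 0 := by
      rw [ha_right _ (by norm_num), hτ1 _ (by norm_num)]; norm_num
    have ha_zero : ∀ t : ℝ, 3/4 ≤ t → a t = 0 := by
      intro t ht; simp only [hadef]
      rw [hτ1 (4*t) (by linarith), hτ1 (4*t-2) (by linarith)]; norm_num
    have ha1 : a 1 = 0 := ha_zero _ (by norm_num)
    have hb_zero : ∀ t : ℝ, t ≤ 1/4 → b t = 0 := by
      intro t ht; simp only [hbdef]
      rw [hτ0 (4*t-1) (by linarith), hτ0 (4*t-3) (by linarith)]; norm_num
    have hb_left : ∀ t : ℝ, t ≤ 3/4 → b t = τ (4*t-1) := by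
      intro t ht; simp only [hbdef]; rw [hτ0 (4*t-3) (by linarith), sub_zero]
    have hbq : b (1/4) = 0 := hb_zero _ le_rfl
    have hbh : b (1/2) = 1 := by
      rw [hb_left _ (by norm_num)]; exact hτ1 _ (by norm_num)
    have hb_one : ∀ t : ℝ, 1/2 ≤ t → t ≤ 3/4 → b t = 1 := by
      intro t h1 h2; simp only [hbdef]
      rw [hτ1 (4*t-1) (by linarith), hτ0 (4*t-3) (by linarith)]; norm_num
    have hb_right : ∀ t : ℝ, 3/4 ≤ t → b t = 1 - τ (4*t-3) := by
      intro t ht; simp only [hbdef]; rw [hτ1 (4*t-1) (by linarith)]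
    have hb3q : b (3/4) = 1 := by
      rw [hb_right _ le_rfl, hτ0 _ (by norm_num)]; norm_num
    have hb1 : b 1 = 0 := by
      rw [hb_right _ (by norm_num), hτ1 _ (by norm_num)]; norm_num
    -- vanishing of derivatives on the flat parts
    have hderiv_b0 : ∀ t ∈ Ioo (0:ℝ) (1/4), deriv b t = 0 := by
      intro t ht
      have he : b =ᶠ[nhds t] fun _ => 0 :=
        Filter.eventually_of_mem (Iio_mem_nhds ht.2) fun s hs => hb_zero s (le_of_lt hs)
      rw [he.deriv_eq]; exact deriv_const t 0
    have hderiv_a1 : ∀ t ∈ Ioo (1/4:ℝ) (1/2), deriv a t = 0 := by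
      intro t ht
      have he : a =ᶠ[nhds t] fun _ => 1 :=
        Filter.eventually_of_mem (Ioo_mem_nhds ht.1 ht.2) fun s hs =>
          ha_one s (le_of_lt hs.1) (le_of_lt hs.2)
      rw [he.deriv_eq]; exact deriv_const t 1
    have hderiv_b1 : ∀ t ∈ Ioo (1/2:ℝ) (3/4), deriv b t = 0 := by
      intro t ht
      have he : b =ᶠ[nhds t] fun _ => 1 :=
        Filter.eventually_of_mem (Ioo_mem_nhds ht.1 ht.2) fun s hs =>
          hb_one s (le_of_lt hs.1) (le_of_lt hs.2)
      rw [he.deriv_eq]; exact deriv_const t 1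
    have hderiv_a0 : ∀ t ∈ Ioo (3/4:ℝ) (1:ℝ), deriv a t = 0 := by
      intro t ht
      have he : a =ᶠ[nhds t] fun _ => 0 :=
        Filter.eventually_of_mem (Ioi_mem_nhds ht.1) fun s hs => ha_zero s (le_of_lt hs)
      rw [he.deriv_eq]; exact deriv_const t 0
    -- the smoothed rectangle loop
    set γ : ℝ → ℝ × ℝ := fun t => z + (h * a t, k * b t) with hγdef
    have hγ : ContDiff ℝ ((⊤:ℕ∞) : WithTop ℕ∞) γ :=
      contDiff_const.add ((contDiff_const.mul ha).prodMk (contDiff_const.mul hb))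
    have hloop : γ 1 = γ 0 := by
      simp only [hγdef]; rw [ha1, ha0, hb1, hb_zero 0 (by norm_num)]
    have hd : ∀ t : ℝ, HasDerivAt γ ((h * deriv a t, k * deriv b t) : ℝ × ℝ) t := by
      intro t
      have ha' : HasDerivAt a (deriv a t) t := ((ha.differentiable (by simp)) t).hasDerivAt
      have hb' : HasDerivAt b (deriv b t) t := ((hb.differentiable (by simp)) t).hasDerivAt
      simpa [hγdef] using ((ha'.const_mul h).prodMk (hb'.const_mul k)).const_add z
    have hderiv : ∀ t : ℝ, deriv γ t = (h * deriv a t, k * deriv b t) := fun t => (hd t).deriv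
    set G : ℝ → E := fun t => (h * deriv a t) • ψ₁ (γ t) + (k * deriv b t) • ψ₂ (γ t) with hGdef
    have hG : ∀ t : ℝ, θ (σ (γ t)) (mfderiv 𝓘(ℝ, ℝ × ℝ) I σ (γ t) ((deriv γ t : ℝ × ℝ)))
        = G t := by
      intro t
      simp only [hGdef]
      rw [hderiv t]
      have hsplit2 : ((h * deriv a t, k * deriv b t) : TangentSpace 𝓘(ℝ, ℝ × ℝ) (γ t))
          = (h * deriv a t) • ((1,0) : TangentSpace 𝓘(ℝ, ℝ × ℝ) (γ t))
            + (k * deriv b t) • ((0,1) : TangentSpace 𝓘(ℝ, ℝ × ℝ) (γ t)) := by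
        change ((h * deriv a t, k * deriv b t) : ℝ × ℝ)
          = (h * deriv a t) • ((1,0) : ℝ × ℝ) + (k * deriv b t) • ((0,1) : ℝ × ℝ)
        simp [Prod.ext_iff]
      rw [hsplit2]
      let T := (θ (σ (γ t))).comp (mfderiv 𝓘(ℝ, ℝ × ℝ) I σ (γ t))
      exact (map_add T _ _).trans (congrArg₂ (· + ·)
        (map_smul T (h * deriv a t) ((1,0) : ℝ × ℝ)) (map_smul T (k * deriv b t) ((0,1) : ℝ × ℝ)))
    have hkey2 : (∫ t in (0:ℝ)..1, G t) = 0 :=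
      (intervalIntegral.integral_congr fun t _ => (hG t).symm).trans (key γ hγ hloop)
    have hγc : Continuous γ := hγ.continuous
    have hGc : Continuous G := by
      rw [hGdef]
      exact ((continuous_const.mul hac).smul (hψ₁c.comp hγc)).add
        ((continuous_const.mul hbc).smul (hψ₂c.comp hγc))
    have hii : ∀ p q : ℝ, IntervalIntegrable G volume p q :=
      fun p q => hGc.intervalIntegrable p q
    have hsum : (∫ t in (0:ℝ)..(1/4), G t) + ((∫ t in (1/4:ℝ)..(1/2), G t)
        + ((∫ t in (1/2:ℝ)..(3/4), G t) + ∫ t in (3/4:ℝ)..1, G t)) = 0 := by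
      rw [intervalIntegral.integral_add_adjacent_intervals (hii (1/2) (3/4)) (hii (3/4) 1),
        intervalIntegral.integral_add_adjacent_intervals (hii (1/4) (1/2)) (hii (1/2) 1),
        intervalIntegral.integral_add_adjacent_intervals (hii 0 (1/4)) (hii (1/4) 1)]
      exact hkey2
    have hp1 : (∫ t in (0:ℝ)..(1/4), G t) = ∫ u in (0:ℝ)..1, h • ψ₁ (z + (h * u, 0)) := by
      have e1 : (∫ t in (0:ℝ)..(1/4), G t)
          = ∫ t in (0:ℝ)..(1/4), deriv a t • ((fun u => h • ψ₁ (z + (h * u, 0))) ∘ a) t := by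
        apply intervalIntegral.integral_congr_ae
        filter_upwards [ae_ne_const (1/4 : ℝ)] with t htne hmem
        rw [Set.uIoc_of_le (by norm_num : (0:ℝ) ≤ 1/4)] at hmem
        have ht4 : t < 1/4 := lt_of_le_of_ne hmem.2 htne
        have hbt : b t = 0 := hb_zero t (le_of_lt ht4)
        have hbt' : deriv b t = 0 := hderiv_b0 t ⟨hmem.1, ht4⟩
        have hγt : γ t = z + (h * a t, 0) := by simp only [hγdef]; rw [hbt, mul_zero]
        simp only [hGdef, Function.comp_apply, hbt', mul_zero, zero_smul, add_zero, hγt]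
        rw [smul_smul, mul_comm]
      rw [e1, intervalIntegral.integral_comp_smul_deriv (f := a) (f' := deriv a)
        (g := fun u => h • ψ₁ (z + (h * u, 0))) (a := 0) (b := 1/4)
        (fun t _ => ((ha.differentiable (by simp)) t).hasDerivAt) hac.continuousOn
        (show Continuous fun u => h • ψ₁ (z + (h * u, 0)) from
          (hψ₁c.comp (by fun_prop)).const_smul h), ha0, haq]
    have hp2 : (∫ t in (1/4:ℝ)..(1/2), G t) = ∫ u in (0:ℝ)..1, k • ψ₂ (z + (h, k * u)) := by
      have e1 : (∫ t in (1/4:ℝ)..(1/2), G t)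
          = ∫ t in (1/4:ℝ)..(1/2), deriv b t • ((fun u => k • ψ₂ (z + (h, k * u))) ∘ b) t := by
        apply intervalIntegral.integral_congr_ae
        filter_upwards [ae_ne_const (1/2 : ℝ)] with t htne hmem
        rw [Set.uIoc_of_le (by norm_num : (1/4:ℝ) ≤ 1/2)] at hmem
        have ht2 : t < 1/2 := lt_of_le_of_ne hmem.2 htne
        have hat : a t = 1 := ha_one t (le_of_lt hmem.1) (le_of_lt ht2)
        have hat' : deriv a t = 0 := hderiv_a1 t ⟨hmem.1, ht2⟩
        have hγt : γ t = z + (h, k * b t) := by simp only [hγdef]; rw [hat, mul_one]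
        simp only [hGdef, Function.comp_apply, hat', mul_zero, zero_smul, zero_add, hγt]
        rw [smul_smul, mul_comm]
      rw [e1, intervalIntegral.integral_comp_smul_deriv (f := b) (f' := deriv b)
        (g := fun u => k • ψ₂ (z + (h, k * u))) (a := 1/4) (b := 1/2)
        (fun t _ => ((hb.differentiable (by simp)) t).hasDerivAt) hbc.continuousOn
        (show Continuous fun u => k • ψ₂ (z + (h, k * u)) from
          (hψ₂c.comp (by fun_prop)).const_smul k), hbq, hbh]
    have hp3 : (∫ t in (1/2:ℝ)..(3/4), G t)
        = -∫ u in (0:ℝ)..1, h • ψ₁ (z + (h * u, k)) := by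
      have e1 : (∫ t in (1/2:ℝ)..(3/4), G t)
          = ∫ t in (1/2:ℝ)..(3/4), deriv a t • ((fun u => h • ψ₁ (z + (h * u, k))) ∘ a) t := by
        apply intervalIntegral.integral_congr_ae
        filter_upwards [ae_ne_const (3/4 : ℝ)] with t htne hmem
        rw [Set.uIoc_of_le (by norm_num : (1/2:ℝ) ≤ 3/4)] at hmem
        have ht3 : t < 3/4 := lt_of_le_of_ne hmem.2 htne
        have hbt : b t = 1 := hb_one t (le_of_lt hmem.1) (le_of_lt ht3)
        have hbt' : deriv b t = 0 := hderiv_b1 t ⟨hmem.1, ht3⟩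
        have hγt : γ t = z + (h * a t, k) := by simp only [hγdef]; rw [hbt, mul_one]
        simp only [hGdef, Function.comp_apply, hbt', mul_zero, zero_smul, add_zero, hγt]
        rw [smul_smul, mul_comm]
      rw [e1, intervalIntegral.integral_comp_smul_deriv (f := a) (f' := deriv a)
        (g := fun u => h • ψ₁ (z + (h * u, k))) (a := 1/2) (b := 3/4)
        (fun t _ => ((ha.differentiable (by simp)) t).hasDerivAt) hac.continuousOn
        (show Continuous fun u => h • ψ₁ (z + (h * u, k)) from
          (hψ₁c.comp (by fun_prop)).const_smul h), hah, ha3q,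
        intervalIntegral.integral_symm]
    have hp4 : (∫ t in (3/4:ℝ)..1, G t)
        = -∫ u in (0:ℝ)..1, k • ψ₂ (z + (0, k * u)) := by
      have e1 : (∫ t in (3/4:ℝ)..1, G t)
          = ∫ t in (3/4:ℝ)..1, deriv b t • ((fun u => k • ψ₂ (z + (0, k * u))) ∘ b) t := by
        apply intervalIntegral.integral_congr_ae
        filter_upwards [ae_ne_const (1 : ℝ)] with t htne hmem
        rw [Set.uIoc_of_le (by norm_num : (3/4:ℝ) ≤ 1)] at hmem
        have ht1 : t < 1 := lt_of_le_of_ne hmem.2 htne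
        have hat : a t = 0 := ha_zero t (le_of_lt hmem.1)
        have hat' : deriv a t = 0 := hderiv_a0 t ⟨hmem.1, ht1⟩
        have hγt : γ t = z + (0, k * b t) := by simp only [hγdef]; rw [hat, mul_zero]
        simp only [hGdef, Function.comp_apply, hat', mul_zero, zero_smul, zero_add, hγt]
        rw [smul_smul, mul_comm]
      rw [e1, intervalIntegral.integral_comp_smul_deriv (f := b) (f' := deriv b)
        (g := fun u => k • ψ₂ (z + (0, k * u))) (a := 3/4) (b := 1)
        (fun t _ => ((hb.differentiable (by simp)) t).hasDerivAt) hbc.continuousOn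
        (show Continuous fun u => k • ψ₂ (z + (0, k * u)) from
          (hψ₂c.comp (by fun_prop)).const_smul k), hb3q, hb1,
        intervalIntegral.integral_symm]
    rw [hp1, hp2, hp3, hp4] at hsum
    have h9 : ((∫ u in (0:ℝ)..1, h • ψ₁ (z + (h * u, 0))) +
          ∫ u in (0:ℝ)..1, k • ψ₂ (z + (h, k * u)))
        - ((∫ u in (0:ℝ)..1, h • ψ₁ (z + (h * u, k))) +
          ∫ u in (0:ℝ)..1, k • ψ₂ (z + (0, k * u))) = 0 := by
      rw [← hsum]; abel
    exact sub_eq_zero.mp h9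
  exact core ψ₁ ψ₂ hsm₁ hsm₂ hrect x
end

section
/- In the setting of a principal H-bundle P over M with closed normal subgroup N ⊆ H, quotient bundle P̄ = P/N with orbit projection π : P → P̄, let ρ : H → GL(V) be a representation with N ⊆ ker(ρ), inducing ρ̄ : H/N → GL(V). Equip P with a principal connection HP and P̄ with the induced connection Tπ(HP). Then the pullback π^* : Ω^k(P̄,V)^{hor}_{ρ̄} → Ω^k(P,V)^{hor}_{ρ} between spaces of invariant horizontal forms is a linear bijection, and it commutes with the absolute derivatives: π^*(D_{ρ̄} θ) = D_ρ(π^* θ), where D(θ) = dθ ∘ (pr_h × ⋯ × pr_h). -/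
open scoped Manifold

lemma alt_eq_of_sub {k : ℕ} {F W : Type*} [AddCommGroup F] [Module ℝ F]
    [AddCommGroup W] [Module ℝ W]
    (f : F [⋀^Fin k]→ₗ[ℝ] W) (S : F → Prop)
    (hS : ∀ w : Fin k → F, (∃ i, S (w i)) → f w = 0)
    (u w : Fin k → F) (h : ∀ i, S (u i - w i)) : f u = f w := by
  have key : ∀ s : Finset (Fin k), f (fun i => if i ∈ s then u i else w i) = f w := by
    intro s
    induction s using Finset.induction with
    | empty => simp
    | @insert a s ha ih =>
      have he : (fun i => if i ∈ insert a s then u i else w i)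
           = Function.update (fun i => if i ∈ s then u i else w i) a (u a) := by
        funext i
        rcases eq_or_ne i a with rfl | hia
        · simp
        · simp [Function.update_of_ne hia, hia]
      rw [he]
      have hdecomp : u a = (if a ∈ s then u a else w a) + (u a - w a) := by simp [ha]
      rw [hdecomp, f.map_update_add]
      rw [Function.update_eq_self]
      have hz : f (Function.update (fun i => if i ∈ s then u i else w i) a (u a - w a)) = 0 := by
        apply hS
        exact ⟨a, by simp [h a]⟩
      rw [hz, add_zero, ih]
  have := key Finset.univ
  simpa using this


section

variable
    {E1 : Type} [NormedAddCommGroup E1] [NormedSpace ℝ E1]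
    {H1 : Type} [TopologicalSpace H1] {I : ModelWithCorners ℝ E1 H1}
    {P : Type} [TopologicalSpace P] [ChartedSpace H1 P] [IsManifold I (⊤ : ℕ∞) P]
    {Eb : Type} [NormedAddCommGroup Eb] [NormedSpace ℝ Eb]
    {Hb : Type} [TopologicalSpace Hb] {Ib : ModelWithCorners ℝ Eb Hb}
    {Pb : Type} [TopologicalSpace Pb] [ChartedSpace Hb Pb]
    [IsManifold Ib (⊤ : ℕ∞) Pb]
    {V : Type} [NormedAddCommGroup V] [NormedSpace ℝ V]

/-- The pullback of a `V`-valued `k`-form along `π : P → P̄`. -/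
noncomputable def pullbackForm (π : P → Pb) (k : ℕ)
    (θb : ∀ x : Pb, TangentSpace Ib x [⋀^Fin k]→ₗ[ℝ] V) :
    ∀ p : P, TangentSpace I p [⋀^Fin k]→ₗ[ℝ] V := fun p =>
  (θb (π p)).compLinearMap
    (mfderiv I Ib π p : TangentSpace I p →ₗ[ℝ] TangentSpace Ib (π p))

/-- For the quotient `π : P → P̄ = P/N` of a principal bundle with
representation `ρ` trivial on `N` (elements acting trivially on `P̄` act trivially
on `V`), the pullback `π^*` is a linear bijection from the invariant horizontal
`V`-valued `k`-forms on `P̄` onto the invariant horizontal `k`-forms on `P`, and it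
commutes with the absolute derivatives `D f = df ∘ pr_h` determined by compatible
horizontal projections `pr_h` on `P` and `P̄`. -/
theorem stmt18
    {EM : Type} [NormedAddCommGroup EM] [NormedSpace ℝ EM]
    {HM : Type} [TopologicalSpace HM] {IM : ModelWithCorners ℝ EM HM}
    {M : Type} [TopologicalSpace M] [ChartedSpace HM M] [IsManifold IM (⊤ : ℕ∞) M]
    (q : P → M) (qb : Pb → M) (π : P → Pb)
    (hq : ContMDiff I IM (⊤ : ℕ∞) q) (hqb : ContMDiff Ib IM (⊤ : ℕ∞) qb) (hπ : ContMDiff I Ib (⊤ : ℕ∞) π)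
    (hcomp : qb ∘ π = q)
    (hπsurj : Function.Surjective π)
    (hπsub : ∀ p : P, Function.Surjective (mfderiv I Ib π p))
    {Hgrp : Type} [Group Hgrp]
    (R : Hgrp → P → P) (Rb : Hgrp → Pb → Pb)
    (hR : ∀ g, ContMDiff I I (⊤ : ℕ∞) (R g)) (hRb : ∀ g, ContMDiff Ib Ib (⊤ : ℕ∞) (Rb g))
    (hR1 : R 1 = id) (hRm : ∀ g h : Hgrp, R (g * h) = R h ∘ R g)
    (hcomm : ∀ g, π ∘ R g = Rb g ∘ π)
    (hqR : ∀ g, q ∘ R g = q)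
    (hfib : ∀ p p' : P, π p = π p' → ∃ g, R g p = p' ∧ π ∘ R g = π)
    (ρ : Hgrp → V →L[ℝ] V) (hρ1 : ρ 1 = ContinuousLinearMap.id ℝ V)
    (hρm : ∀ g h : Hgrp, ρ (g * h) = (ρ g).comp (ρ h))
    (htriv : ∀ g, π ∘ R g = π → ρ g = ContinuousLinearMap.id ℝ V)
    (k : ℕ) :
    -- π^* is linear
    (∀ θ₁ θ₂ : ∀ x : Pb, TangentSpace Ib x [⋀^Fin k]→ₗ[ℝ] V,
      pullbackForm (I := I) (Ib := Ib) (V := V) π k (θ₁ + θ₂)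
        = pullbackForm (I := I) π k θ₁ + pullbackForm (I := I) π k θ₂) ∧
    (∀ (c : ℝ) (θ : ∀ x : Pb, TangentSpace Ib x [⋀^Fin k]→ₗ[ℝ] V),
      pullbackForm (I := I) (Ib := Ib) (V := V) π k (c • θ)
        = c • pullbackForm (I := I) π k θ) ∧
    -- π^* is a bijection from the invariant horizontal forms on P̄
    -- onto the invariant horizontal forms on P
    Set.BijOn (pullbackForm (I := I) (Ib := Ib) (V := V) π k)
      {θb | (∀ (x : Pb) (v : Fin k → TangentSpace Ib x),
              (∃ i, v i ∈ LinearMap.ker (mfderiv Ib IM qb x : TangentSpace Ib x →ₗ[ℝ] TangentSpace IM (qb x))) → θb x v = 0) ∧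
            (∀ (g : Hgrp) (x : Pb) (v : Fin k → TangentSpace Ib x),
              ρ g (θb (Rb g x) fun i => mfderiv Ib Ib (Rb g) x (v i)) = θb x v)}
      {θ | (∀ (p : P) (v : Fin k → TangentSpace I p),
              (∃ i, v i ∈ LinearMap.ker (mfderiv I IM q p : TangentSpace I p →ₗ[ℝ] TangentSpace IM (q p))) → θ p v = 0) ∧
            (∀ (g : Hgrp) (p : P) (v : Fin k → TangentSpace I p),
              ρ g (θ (R g p) fun i => mfderiv I I (R g) p (v i)) = θ p v)} ∧
    -- π^* intertwines the absolute derivatives of functions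
    (∀ (prh : ∀ p : P, TangentSpace I p →ₗ[ℝ] TangentSpace I p)
       (prhb : ∀ x : Pb, TangentSpace Ib x →ₗ[ℝ] TangentSpace Ib x),
      (∀ (p : P) (v : TangentSpace I p),
        prhb (π p) (mfderiv I Ib π p v) = mfderiv I Ib π p (prh p v)) →
      ∀ f : Pb → V, ContMDiff Ib 𝓘(ℝ, V) (⊤ : ℕ∞) f →
        ∀ (p : P) (v : TangentSpace I p),
          mfderiv Ib 𝓘(ℝ, V) f (π p) (prhb (π p) (mfderiv I Ib π p v))
            = mfderiv I 𝓘(ℝ, V) (f ∘ π) p (prh p v)) := by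
  classical
  have hπd : ∀ p, MDifferentiableAt I Ib π p := fun p => hπ.mdifferentiableAt (by simp)
  have hqbd : ∀ x, MDifferentiableAt Ib IM qb x := fun x => hqb.mdifferentiableAt (by simp)
  have hRd : ∀ g p, MDifferentiableAt I I (R g) p := fun g p => (hR g).mdifferentiableAt (by simp)
  have hRbd : ∀ g x, MDifferentiableAt Ib Ib (Rb g) x := fun g x => (hRb g).mdifferentiableAt (by simp)
  -- chain rule for q = qb ∘ π
  have hqd : ∀ (p : P) (u : TangentSpace I p),
      mfderiv I IM q p u = mfderiv Ib IM qb (π p) (mfderiv I Ib π p u) := by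
    intro p u
    rw [← hcomp, mfderiv_comp p (hqbd (π p)) (hπd p)]
    rfl
  -- derivative of π ∘ R g when π ∘ R g = π
  have hRπ : ∀ g, π ∘ R g = π → ∀ (p : P) (u : TangentSpace I p),
      mfderiv I Ib π (R g p) (mfderiv I I (R g) p u) = mfderiv I Ib π p u := by
    intro g hg p u
    have h1 : mfderiv I Ib (π ∘ R g) p u
        = mfderiv I Ib π (R g p) (mfderiv I I (R g) p u) := by
      rw [mfderiv_comp p (hπd _) (hRd g p)]; rfl
    rw [← h1, hg]
  -- derivative of π ∘ R g = Rb g ∘ π in general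
  have hRπb : ∀ (g : Hgrp) (p : P) (u : TangentSpace I p),
      mfderiv I Ib π (R g p) (mfderiv I I (R g) p u)
        = mfderiv Ib Ib (Rb g) (π p) (mfderiv I Ib π p u) := by
    intro g p u
    have h1 : mfderiv I Ib (π ∘ R g) p u
        = mfderiv I Ib π (R g p) (mfderiv I I (R g) p u) := by
      rw [mfderiv_comp p (hπd _) (hRd g p)]; rfl
    have h2 : mfderiv I Ib (Rb g ∘ π) p u
        = mfderiv Ib Ib (Rb g) (π p) (mfderiv I Ib π p u) := by
      rw [mfderiv_comp p (hRbd g (π p)) (hπd p)]; rfl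
    rw [← h1, ← h2, hcomm g]
  -- evaluation of the pullback
  have hpull_eval : ∀ (θb : ∀ x : Pb, TangentSpace Ib x [⋀^Fin k]→ₗ[ℝ] V)
      (p : P) (w : Fin k → TangentSpace I p),
      pullbackForm (I := I) (Ib := Ib) (V := V) π k θb p w
        = θb (π p) (fun i => mfderiv I Ib π p (w i)) := fun _ _ _ => rfl
  -- the key well-definedness lemma on P
  have keyP : ∀ θ : ∀ p : P, TangentSpace I p [⋀^Fin k]→ₗ[ℝ] V,
      (∀ (p : P) (v : Fin k → TangentSpace I p),
        (∃ i, v i ∈ LinearMap.ker (mfderiv I IM q p : TangentSpace I p →ₗ[ℝ] TangentSpace IM (q p))) → θ p v = 0) →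
      (∀ (g : Hgrp) (p : P) (v : Fin k → TangentSpace I p),
        ρ g (θ (R g p) fun i => mfderiv I I (R g) p (v i)) = θ p v) →
      ∀ (p p' : P) (w : Fin k → TangentSpace I p) (w' : Fin k → TangentSpace I p'),
        π p = π p' → (∀ i, mfderiv I Ib π p (w i) = mfderiv I Ib π p' (w' i)) →
        θ p w = θ p' w' := by
    intro θ hhor hinv p p' w w' hpp hw
    obtain ⟨g, hg1, hg2⟩ := hfib p p' hpp
    have hρg := htriv g hg2
    have h1 : θ p w = θ (R g p) (fun i => mfderiv I I (R g) p (w i)) := by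
      rw [← hinv g p w, hρg]; rfl
    rw [h1]
    subst hg1
    apply alt_eq_of_sub (θ (R g p)) (fun u => mfderiv I IM q (R g p) u = 0)
    · intro z ⟨i, hi⟩
      exact hhor (R g p) z ⟨i, LinearMap.mem_ker.mpr hi⟩
    · intro i
      have e1 : mfderiv I Ib π (R g p) (mfderiv I I (R g) p (w i))
          = mfderiv I Ib π (R g p) (w' i) := by
        rw [hRπ g hg2 p (w i), hw i]
      rw [hqd]
      rw [map_sub (mfderiv I Ib π (R g p)), e1, sub_self, map_zero]
      rfl
  -- point-rewriting helper on Pb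
  have congrθ : ∀ (θb : ∀ x : Pb, TangentSpace Ib x [⋀^Fin k]→ₗ[ℝ] V) (x y : Pb),
      x = y → ∀ v : Fin k → Eb, θb x v = θb y v := by
    rintro θb x y rfl v; rfl
  have congrqb : ∀ (x y : Pb), x = y → ∀ u : Eb,
      mfderiv Ib IM qb x u = mfderiv Ib IM qb y u := by
    rintro x y rfl u; rfl
  have congrRb : ∀ (g : Hgrp) (x y : Pb), x = y → ∀ u : Eb,
      mfderiv Ib Ib (Rb g) x u = mfderiv Ib Ib (Rb g) y u := by
    rintro g x y rfl u; rfl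
  refine ⟨?_, ?_, ⟨?_, ?_, ?_⟩, ?_⟩
  · -- additivity
    intro θ₁ θ₂
    funext p
    ext v
    simp [pullbackForm]
  · -- smul
    intro c θ
    funext p
    ext v
    simp [pullbackForm]
  · -- MapsTo
    intro θb ⟨hbhor, hbinv⟩
    constructor
    · intro p v ⟨i, hi⟩
      rw [hpull_eval]
      apply hbhor (π p)
      refine ⟨i, LinearMap.mem_ker.mpr ?_⟩
      show mfderiv Ib IM qb (π p) (mfderiv I Ib π p (v i)) = 0
      rw [← hqd p (v i)]
      exact hi
    · intro g p v
      rw [hpull_eval, hpull_eval]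
      have hc : π (R g p) = Rb g (π p) := congrFun (hcomm g) p
      have harg : (fun i => mfderiv I Ib π (R g p) (mfderiv I I (R g) p (v i)))
          = (fun i => mfderiv Ib Ib (Rb g) (π p) (mfderiv I Ib π p (v i))) :=
        funext fun i => hRπb g p (v i)
      rw [harg]
      exact (congrArg (ρ g) (congrθ θb _ _ hc _)).trans (hbinv g (π p) (fun i => mfderiv I Ib π p (v i)))
  · -- InjOn
    intro θ₁ _ θ₂ _ heq
    funext x
    ext v
    obtain ⟨p, rfl⟩ := hπsurj x
    choose w hw using fun i => hπsub p (v i)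
    have hv : v = fun i => mfderiv I Ib π p (w i) := funext fun i => (hw i).symm
    rw [hv, ← hpull_eval θ₁ p w, ← hpull_eval θ₂ p w, heq]
  · -- SurjOn
    intro θ hθ
    obtain ⟨hhor, hinv⟩ := hθ
    choose σ hσ using hπsurj
    have hLx : ∀ x : Pb, ∃ s : TangentSpace Ib x →ₗ[ℝ] TangentSpace I (σ x),
        ∀ v : TangentSpace Ib x, mfderiv I Ib π (σ x) (s v) = v := by
      intro x
      have hsurj : Function.Surjective
          ((mfderiv I Ib π (σ x) : TangentSpace I (σ x) →ₗ[ℝ] TangentSpace Ib (π (σ x)))) :=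
        hπsub (σ x)
      obtain ⟨s, hs⟩ := (mfderiv I Ib π (σ x) : TangentSpace I (σ x) →ₗ[ℝ]
          TangentSpace Ib (π (σ x))).exists_rightInverse_of_surjective
          (LinearMap.range_eq_top.mpr hsurj)
      refine ⟨s, fun v => ?_⟩
      exact congrFun (congrArg DFunLike.coe hs) v
    choose s hs using hLx
    refine ⟨fun x => (θ (σ x)).compLinearMap (s x), ⟨?_, ?_⟩, ?_⟩
    · -- horizontal
      intro x v ⟨i, hi⟩
      show θ (σ x) (fun j => s x (v j)) = 0
      apply hhor (σ x)
      refine ⟨i, LinearMap.mem_ker.mpr ?_⟩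
      show mfderiv I IM q (σ x) (s x (v i)) = 0
      rw [hqd, hs x (v i), congrqb (π (σ x)) x (hσ x) (v i)]
      exact hi
    · -- invariance
      intro g x v
      have hp : π (σ x) = x := hσ x
      have hw : ∀ i, mfderiv I Ib π (σ x) (s x (v i)) = v i := fun i => hs x (v i)
      have h1 : θ (σ (Rb g x)) (fun i => s (Rb g x) (mfderiv Ib Ib (Rb g) x (v i)))
          = θ (R g (σ x)) (fun i => mfderiv I I (R g) (σ x) (s x (v i))) := by
        apply keyP θ hhor hinv
        · have e : π (R g (σ x)) = Rb g (π (σ x)) := congrFun (hcomm g) (σ x)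
          rw [hσ (Rb g x), e, hp]
        · intro i
          show mfderiv I Ib π (σ (Rb g x)) (s (Rb g x) (mfderiv Ib Ib (Rb g) x (v i)))
              = mfderiv I Ib π (R g (σ x)) (mfderiv I I (R g) (σ x) (s x (v i)))
          rw [hs (Rb g x), hRπb g (σ x) (s x (v i)), hw i,
            congrRb g (π (σ x)) x hp (v i)]
      show ρ g (θ (σ (Rb g x)) (fun i => s (Rb g x) (mfderiv Ib Ib (Rb g) x (v i))))
          = θ (σ x) (fun i => s x (v i))
      rw [h1]
      exact hinv g (σ x) (fun i => s x (v i))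
    · -- pullback equals θ
      funext p
      ext v
      rw [hpull_eval]
      show θ (σ (π p)) (fun i => s (π p) (mfderiv I Ib π p (v i))) = θ p v
      apply keyP θ hhor hinv
      · rw [hσ (π p)]
      · intro i
        rw [hs (π p)]
  · -- absolute derivatives of functions
    intro prh prhb hcompat f hf p v
    rw [hcompat p v, mfderiv_comp p (hf.mdifferentiableAt (by simp)) (hπd p)]
    rfl


end
end
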